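/- The trace of the inverse of the negative discrete Dirichlet Laplacian converges to $1/6$ as the mesh size tends to zero: $\lim_{h \to 0} \mathrm{Tr}((-\Delta_h)^{-1}) = \sum_{k=1}^{\infty} \frac{1}{\pi^2 k^2} = \frac{1}{6}$. -/

import Mathlib

open Finset

/-- Candidate inverse entry, extended to integer indices. -/
noncomputable def bb (n : ℕ) (i j : ℤ) : ℝ :=
  (((min i j : ℤ) : ℝ) + 1) * ((n : ℝ) - ((max i j : ℤ) : ℝ)) / ((n : ℝ) + 1) ^ 3

lemma bb_left (n : ℕ) (j : ℤ) (hj : 0 ≤ j) : bb n (-1) j = 0 := by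
  have : min (-1 : ℤ) j = -1 := min_eq_left (by omega)
  simp [bb, this]

lemma bb_right (n : ℕ) (j : ℤ) (hj : j ≤ (n : ℤ)) : bb n (n : ℤ) j = 0 := by
  have : max (n : ℤ) j = n := max_eq_left hj
  simp [bb, this]

lemma bb_core (n : ℕ) (i j : ℤ) (h0i : 0 ≤ i) (hin : i < n) (h0j : 0 ≤ j) (hjn : j < n) :
    ((n : ℝ) + 1) ^ 2 * (2 * bb n i j - bb n (i + 1) j - bb n (i - 1) j)
      = if i = j then 1 else 0 := by
  have hc : ((n : ℝ) + 1) ≠ 0 := by positivity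
  rcases lt_trichotomy i j with h | h | h
  · have e1 : min i j = i := min_eq_left (by omega)
    have e2 : min (i + 1) j = i + 1 := min_eq_left (by omega)
    have e3 : min (i - 1) j = i - 1 := min_eq_left (by omega)
    have f1 : max i j = j := max_eq_right (by omega)
    have f2 : max (i + 1) j = j := max_eq_right (by omega)
    have f3 : max (i - 1) j = j := max_eq_right (by omega)
    rw [if_neg (by omega)]
    simp only [bb, e1, e2, e3, f1, f2, f3]
    push_cast
    field_simp
    ring
  · subst h
    have e2 : min (i + 1) i = i := min_eq_right (by omega)
    have e3 : min (i - 1) i = i - 1 := min_eq_left (by omega)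
    have f2 : max (i + 1) i = i + 1 := max_eq_left (by omega)
    have f3 : max (i - 1) i = i := max_eq_right (by omega)
    rw [if_pos rfl]
    simp only [bb, e2, e3, f2, f3, min_self, max_self]
    push_cast
    field_simp
    ring
  · have e1 : min i j = j := min_eq_right (by omega)
    have e2 : min (i + 1) j = j := min_eq_right (by omega)
    have e3 : min (i - 1) j = j := min_eq_right (by omega)
    have f1 : max i j = i := max_eq_left (by omega)
    have f2 : max (i + 1) j = i + 1 := max_eq_left (by omega)
    have f3 : max (i - 1) j = i - 1 := max_eq_left (by omega)
    rw [if_neg (by omega)]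
    simp only [bb, e1, e2, e3, f1, f2, f3]
    push_cast
    field_simp
    ring

lemma sum_if_eq (n m : ℕ) (f : ℕ → ℝ) :
    (∑ k ∈ Finset.range n, if k = m then f k else 0) = if m < n then f m else 0 := by
  rw [Finset.sum_ite_eq' (Finset.range n) m f]
  simp [Finset.mem_range]

lemma sum_if_succ (n m : ℕ) (f : ℕ → ℝ) :
    (∑ k ∈ Finset.range n, if m = k + 1 then f k else 0)
      = if m ≠ 0 ∧ m - 1 < n then f (m - 1) else 0 := by
  cases m with
  | zero => simp
  | succ p =>
    have h : ∀ k, (if p + 1 = k + 1 then f k else 0) = (if k = p then f k else 0) := by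
      intro k; by_cases hk : k = p <;> simp [hk] <;> omega
    simp_rw [h]
    rw [sum_if_eq]
    simp

lemma sumL (m n : ℕ) :
    ∑ i ∈ Finset.range n, (((i : ℝ) + 1) * ((m : ℝ) - (i : ℝ)))
      = (m : ℝ) * n * (n + 1) / 2 - ((n : ℝ) - 1) * n * (n + 1) / 3 := by
  induction n with
  | zero => simp
  | succ k ih =>
    rw [Finset.sum_range_succ, ih]
    push_cast
    ring

noncomputable def Ffun (n : ℕ) (c : ℝ) (iv jv : ℕ) (k : ℕ) : ℝ :=
  (if k = iv then 2 * c ^ 2 * bb n k jv else 0)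
    + (if k = iv + 1 then -(c ^ 2) * bb n k jv else 0)
    + (if iv = k + 1 then -(c ^ 2) * bb n k jv else 0)

lemma trace_inv (n : ℕ) (M : Matrix (Fin n) (Fin n) ℝ)
    (hM : ∀ i j : Fin n, M i j =
      if i = j then 2 * ((n : ℝ) + 1) ^ 2
      else if (i : ℕ) + 1 = (j : ℕ) ∨ (j : ℕ) + 1 = (i : ℕ) then -(((n : ℝ) + 1) ^ 2)
      else 0) :
    Matrix.trace M⁻¹ = (((n : ℝ) + 1) ^ 2 - 1) / (6 * ((n : ℝ) + 1) ^ 2) := by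
  have hc : ((n : ℝ) + 1) ≠ 0 := by positivity
  set c : ℝ := (n : ℝ) + 1 with hcdef
  set B : Matrix (Fin n) (Fin n) ℝ := Matrix.of fun i j => bb n (i : ℕ) (j : ℕ) with hB
  have hMB : M * B = 1 := by
    ext i j
    rw [Matrix.mul_apply, Matrix.one_apply]
    have hterm : ∀ k : Fin n, M i k * B k j = Ffun n c (i : ℕ) (j : ℕ) (k : ℕ) := by
      intro k
      rw [hM i k]
      have hBkj : B k j = bb n (k : ℕ) (j : ℕ) := rfl
      rw [hBkj]
      simp only [Ffun, Fin.ext_iff]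
      split_ifs <;> first | ring1 | (exfalso; omega)
    rw [Finset.sum_congr rfl fun k _ => hterm k,
      Fin.sum_univ_eq_sum_range (Ffun n c (i : ℕ) (j : ℕ)) n]
    simp only [Ffun]
    rw [Finset.sum_add_distrib, Finset.sum_add_distrib, sum_if_eq, sum_if_eq, sum_if_succ]
    have hi : (i : ℕ) < n := i.isLt
    have hj : (j : ℕ) < n := j.isLt
    rw [if_pos hi]
    have h2 : (if (i : ℕ) + 1 < n then -(c ^ 2) * bb n (((i : ℕ) + 1 : ℕ)) (j : ℕ) else 0)
        = -(c ^ 2) * bb n ((i : ℕ) + 1) (j : ℕ) := by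
      split_ifs with h
      · push_cast; ring_nf
      · have : ((i : ℕ) + 1 : ℕ) = n := by omega
        have hz : bb n ((i : ℕ) + 1) (j : ℕ) = 0 := by
          have : ((i : ℕ) : ℤ) + 1 = (n : ℤ) := by omega
          rw [this]
          exact bb_right n _ (by exact_mod_cast hj.le)
        rw [hz]; ring
    have h3 : (if (i : ℕ) ≠ 0 ∧ (i : ℕ) - 1 < n then -(c ^ 2) * bb n (((i : ℕ) - 1 : ℕ)) (j : ℕ) else 0)
        = -(c ^ 2) * bb n ((i : ℕ) - 1) (j : ℕ) := by
      split_ifs with h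
      · have : (((i : ℕ) - 1 : ℕ) : ℤ) = ((i : ℕ) : ℤ) - 1 := by omega
        rw [this]
      · have h0 : (i : ℕ) = 0 := by omega
        have hz : bb n ((i : ℕ) - 1) (j : ℕ) = 0 := by
          rw [h0]
          norm_num
          exact bb_left n _ (by positivity)
        rw [hz]; ring
    rw [h2, h3]
    have hcore := bb_core n (i : ℕ) (j : ℕ) (by positivity) (by exact_mod_cast hi)
      (by positivity) (by exact_mod_cast hj)
    have hiff : (i = j) ↔ (((i : ℕ) : ℤ) = ((j : ℕ) : ℤ)) := by
      simp [Fin.ext_iff]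
    by_cases hij : i = j
    · rw [if_pos hij]
      rw [if_pos (hiff.mp hij)] at hcore
      linear_combination hcore
    · rw [if_neg hij]
      rw [if_neg (fun h => hij (hiff.mpr h))] at hcore
      linear_combination hcore
  rw [Matrix.inv_eq_right_inv hMB]
  have htr : Matrix.trace B = ∑ k ∈ Finset.range n, bb n k k := by
    rw [Matrix.trace]
    exact Fin.sum_univ_eq_sum_range (fun k => bb n k k) n
  rw [htr]
  have hdiag : ∀ k ∈ Finset.range n, bb n k k
      = (((k : ℝ) + 1) * ((n : ℝ) - (k : ℝ))) / c ^ 3 := by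
    intro k _
    simp [bb, hcdef]
  rw [Finset.sum_congr rfl hdiag, ← Finset.sum_div, sumL]
  field_simp
  ring

theorem stmt_2
    (A : ∀ Z : ℕ, Matrix (Fin (Z - 1)) (Fin (Z - 1)) ℝ)
    (hA : ∀ Z : ℕ, 2 ≤ Z → ∀ i j : Fin (Z - 1), A Z i j =
      if i = j then 2 * (Z : ℝ) ^ 2
      else if (i : ℕ) + 1 = (j : ℕ) ∨ (j : ℕ) + 1 = (i : ℕ) then -((Z : ℝ) ^ 2) else 0) :
    Filter.Tendsto (fun Z : ℕ => Matrix.trace ((A Z)⁻¹)) Filter.atTop (nhds (1 / 6)) ∧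
    ∑' k : ℕ, 1 / (Real.pi ^ 2 * ((k : ℝ) + 1) ^ 2) = 1 / 6 := by
  constructor
  · have hev : ∀ᶠ Z : ℕ in Filter.atTop,
        Matrix.trace ((A Z)⁻¹) = 1 / 6 - 1 / 6 * (1 / (Z : ℝ) * (1 / (Z : ℝ))) := by
      rw [Filter.eventually_atTop]
      refine ⟨2, fun Z hZ => ?_⟩
      have hcast : ((Z - 1 : ℕ) : ℝ) + 1 = (Z : ℝ) := by
        have : ((Z - 1 : ℕ) : ℝ) = (Z : ℝ) - 1 := by
          push_cast [Nat.cast_sub (by omega : 1 ≤ Z)]; ring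
        rw [this]; ring
      have := trace_inv (Z - 1) (A Z) (by
        intro i j
        rw [hA Z hZ i j, hcast])
      rw [this, hcast]
      have hZ0 : (Z : ℝ) ≠ 0 := by positivity
      field_simp
    have h1 : Filter.Tendsto (fun Z : ℕ => 1 / (Z : ℝ)) Filter.atTop (nhds 0) :=
      tendsto_one_div_atTop_nhds_zero_nat
    have h2 : Filter.Tendsto (fun Z : ℕ => 1 / 6 - 1 / 6 * (1 / (Z : ℝ) * (1 / (Z : ℝ))))
        Filter.atTop (nhds (1 / 6 - 1 / 6 * (0 * 0))) :=
      tendsto_const_nhds.sub (tendsto_const_nhds.mul (h1.mul h1))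
    have h3 : (1 / 6 - 1 / 6 * ((0:ℝ) * 0)) = 1 / 6 := by norm_num
    rw [h3] at h2
    exact Filter.Tendsto.congr' (Filter.EventuallyEq.symm hev) h2
  · have hpi : Real.pi ≠ 0 := Real.pi_ne_zero
    have hs : HasSum (fun n : ℕ => (1 : ℝ) / ((n : ℝ) + 1) ^ 2) (Real.pi ^ 2 / 6) := by
      have h := hasSum_zeta_two
      have h' : HasSum (fun n : ℕ => (1 : ℝ) / ((n + 1 : ℕ) : ℝ) ^ 2) (Real.pi ^ 2 / 6) := by
        refine (hasSum_nat_add_iff (f := fun n : ℕ => (1 : ℝ) / (n : ℝ) ^ 2) 1).mpr ?_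
        simpa using h
      convert h' using 2 with k
      push_cast
      ring
    have hs2 : HasSum (fun k : ℕ => 1 / (Real.pi ^ 2 * ((k : ℝ) + 1) ^ 2)) (1 / 6) := by
      have h := hs.mul_left (1 / Real.pi ^ 2)
      have heq : (fun k : ℕ => 1 / Real.pi ^ 2 * ((1 : ℝ) / ((k : ℝ) + 1) ^ 2))
          = fun k : ℕ => 1 / (Real.pi ^ 2 * ((k : ℝ) + 1) ^ 2) := by
        funext k; rw [div_mul_div_comm, one_mul]
      have hval : 1 / Real.pi ^ 2 * (Real.pi ^ 2 / 6) = 1 / 6 := by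
        field_simp
      rw [heq, hval] at h
      exact h
    exact hs2.tsum_eq
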